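/- Let F be a field of characteristic p > 0, let {a₁,…,aₙ} ⊆ F* be p-independent over F (so π = ⟪a₁,…,aₙ⟫ is anisotropic over F), let 1 ≤ s ≤ n, and set σ = ⟨1,a₁,…,a_s⟩. Let E/F be a field extension and set ℓ = dim(σ_E)_an. Then dim(π_E)_an ≥ p^e, where e is the least natural number with ℓ ≤ p^e (i.e., dim(π_E)_an is at least the smallest power of p that is ≥ ℓ). -/

import Mathlib

open scoped BigOperators

set_option synthInstance.maxHeartbeats 1000000
set_option maxHeartbeats 1000000

/-- The subfield `F^p` of `p`-th powers of `F` (generated as a subfield). -/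
def pPow (p : ℕ) (F : Type*) [Field F] : Subfield F :=
  Subfield.closure (Set.range fun x : F => x ^ p)

/-- The degree `[F^p(S) : F^p]`. -/
noncomputable def pDeg (p : ℕ) {F : Type*} [Field F] (S : Set F) : ℕ :=
  Module.finrank ↥(pPow p F) ↥(IntermediateField.adjoin ↥(pPow p F) S)

/-- A finite family `a : ι → F` is `p`-independent over `F` if
`[F^p(a i, i : ι) : F^p] = p ^ #ι`. -/
def pIndep (p : ℕ) {F : Type*} [Field F] {ι : Type*} [Fintype ι] (a : ι → F) : Prop :=
  pDeg p (Set.range a) = p ^ Fintype.card ι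

/-- The defect `i_d(φ_E)` of the diagonal quasilinear `p`-form with coefficients `a` over `E`:
the `E`-dimension of its zero set (an `E`-subspace in characteristic `p`). -/
noncomputable def defect (p : ℕ) (E : Type*) [Field E] {ι : Type*} [Fintype ι] (a : ι → E) : ℕ :=
  Module.finrank E ↥(Submodule.span E {x : ι → E | ∑ i, a i * x i ^ p = 0})

/-- A diagonal quasilinear `p`-form is anisotropic over `E`. -/
def Anisotropic (p : ℕ) (E : Type*) [Field E] {ι : Type*} [Fintype ι] (a : ι → E) : Prop :=
  ∀ x : ι → E, ∑ i, a i * x i ^ p = 0 → x = 0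

/-- The value set `D_E(φ)` of a diagonal quasilinear `p`-form. -/
def valueSet (p : ℕ) (E : Type*) [Field E] {ι : Type*} [Fintype ι] (a : ι → E) : Set E :=
  {y | ∃ x : ι → E, y = ∑ i, a i * x i ^ p}
universe u v w

section Aux

open Module Polynomial IntermediateField

variable (p : ℕ) [Fact p.Prime] (E : Type v) [Field E] [CharP E p]

set_option linter.unusedSectionVars false

end Aux

/-- Frobenius-twisted copy of `E`, as an `E`-module via `c • x = c^p * x`. -/
def Tw (_p : ℕ) (E : Type v) : Type v := E

section Aux2
open Module Polynomial IntermediateField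
variable (p : ℕ) [Fact p.Prime] (E : Type v) [Field E] [CharP E p]

noncomputable instance : AddCommGroup (Tw p E) := inferInstanceAs (AddCommGroup E)

noncomputable instance : Module E (Tw p E) :=
  haveI : ExpChar E p := ExpChar.prime Fact.out
  Module.compHom E (frobenius E p)

/-- inclusion of `E` into its twisted copy -/
def Tw.mk : E → Tw p E := id

/-- inverse inclusion -/
def Tw.unmk : Tw p E → E := id

lemma Tw.mk_unmk (x : Tw p E) : Tw.mk p E (Tw.unmk p E x) = x := rfl

lemma Tw.mk_add (x y : E) : Tw.mk p E (x + y) = Tw.mk p E x + Tw.mk p E y := rfl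

lemma Tw.mk_zero : Tw.mk p E 0 = 0 := rfl

lemma Tw.smul_mk (c x : E) : c • Tw.mk p E x = Tw.mk p E (c ^ p * x) := rfl

lemma Tw.mk_sum {ι : Type*} (s : Finset ι) (f : ι → E) :
    Tw.mk p E (∑ i ∈ s, f i) = ∑ i ∈ s, Tw.mk p E (f i) := rfl

/-- span of the coefficients inside the twisted module; its dimension is `dim φ_an`. -/
noncomputable def coeffSpan {ι : Type*} [Fintype ι] (a : ι → E) : Submodule E (Tw p E) :=
  Submodule.span E (Set.range fun i => Tw.mk p E (a i))

instance {ι : Type*} [Fintype ι] (a : ι → E) : FiniteDimensional E (coeffSpan p E a) :=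
  FiniteDimensional.span_of_finite _ (Set.finite_range _)

lemma defect_add_finrank {ι : Type*} [Fintype ι] (a : ι → E) :
    finrank E (coeffSpan p E a) + defect p E a = Fintype.card ι := by
  classical
  let φ : (ι → E) →ₗ[E] Tw p E :=
    Fintype.linearCombination E (fun i => Tw.mk p E (a i))
  have hker : {x : ι → E | ∑ i, a i * x i ^ p = 0} = ↑(LinearMap.ker φ) := by
    ext x
    have : φ x = Tw.mk p E (∑ i, a i * x i ^ p) := by
      simp only [φ, Fintype.linearCombination_apply, Tw.smul_mk]
      rw [Tw.mk_sum]
      congr 1; funext i; rw [mul_comm]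
    simp only [Set.mem_setOf_eq, SetLike.mem_coe, LinearMap.mem_ker, this]
    constructor
    · intro h; rw [h]; rfl
    · intro h; exact h
  have h2 := LinearMap.finrank_range_add_finrank_ker φ
  rw [Fintype.range_linearCombination, Module.finrank_fintype_fun_eq_card] at h2
  unfold defect
  rw [hker, Submodule.span_eq]
  exact h2

lemma mem_pPow_iff (x : E) : x ∈ pPow p E ↔ ∃ c : E, c ^ p = x := by
  haveI : ExpChar E p := ExpChar.prime Fact.out
  have h : (Set.range fun x : E => x ^ p) = ((frobenius E p).fieldRange : Set E) := by
    ext y; simp [RingHom.mem_fieldRange, frobenius_def, eq_comm]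
  rw [pPow, h, Subfield.closure_eq]
  simp [RingHom.mem_fieldRange, frobenius_def]

/-- transfer of dimension from the twisted picture to the `E^p`-picture -/
lemma finrank_tw_eq_finrank_pPow (V : Submodule E (Tw p E))
    (K : IntermediateField (pPow p E) E)
    (h : ∀ x : E, Tw.mk p E x ∈ V ↔ x ∈ K) :
    finrank E V = finrank (pPow p E) K := by
  have hp : p.Prime := Fact.out
  haveI : ExpChar E p := ExpChar.prime Fact.out
  let i : ZeroHom E (pPow p E) :=
    ⟨fun c => ⟨c ^ p, (mem_pPow_iff p E _).2 ⟨c, rfl⟩⟩, by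
      ext; simp [zero_pow hp.ne_zero]⟩
  have hi : Function.Bijective i := by
    constructor
    · intro c d hcd
      have h2 : frobenius E p c = frobenius E p d := by
        have := congrArg Subtype.val hcd
        simpa [i, frobenius_def] using this
      exact frobenius_inj E p h2
    · rintro ⟨y, hy⟩
      obtain ⟨c, rfl⟩ := (mem_pPow_iff p E y).1 hy
      exact ⟨c, rfl⟩
  let j : V ≃+ K :=
    { toFun := fun v => ⟨Tw.unmk p E v.1, (h _).1 (by rw [Tw.mk_unmk]; exact v.2)⟩
      invFun := fun k => ⟨Tw.mk p E k.1, (h _).2 k.2⟩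
      left_inv := fun v => Subtype.ext rfl
      right_inv := fun k => Subtype.ext rfl
      map_add' := fun _ _ => rfl }
  have hc : ∀ (r : E) (m : V), j (r • m) = i r • j m := fun r m => Subtype.ext rfl
  have hr := rank_eq_of_equiv_equiv i j hi hc
  simp only [Module.finrank]
  exact congrArg Cardinal.toNat hr

/-- integrality of any element over the subfield of p-th powers -/
lemma isIntegral_pPow (x : E) : IsIntegral (pPow p E) x := by
  have hp : p.Prime := Fact.out
  refine ⟨X ^ p - C (⟨x ^ p, (mem_pPow_iff p E _).2 ⟨x, rfl⟩⟩ : pPow p E),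
    Polynomial.monic_X_pow_sub_C _ hp.ne_zero, ?_⟩
  have : (algebraMap (↥(pPow p E)) E) ⟨x ^ p, (mem_pPow_iff p E _).2 ⟨x, rfl⟩⟩ = x ^ p := rfl
  simp [Polynomial.eval₂_sub, this]

/-- the monomial coefficients of the quasi-Pfister form -/
noncomputable def monCoeff (n : ℕ) (b : Fin n → E) : (Fin n → Fin p) → E :=
  fun i => ∏ r, b r ^ (i r : ℕ)

lemma coeffSpan_mon_iff_adjoin (n : ℕ) (b : Fin n → E) (x : E) :
    Tw.mk p E x ∈ coeffSpan p E (monCoeff p E n b) ↔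
      x ∈ IntermediateField.adjoin (↥(pPow p E)) (Set.range b) := by
  classical
  have hp : p.Prime := Fact.out
  set M := monCoeff p E n b with hM
  set V := coeffSpan p E (monCoeff p E n b) with hV
  set K := IntermediateField.adjoin (↥(pPow p E)) (Set.range b) with hK
  -- monomials are in V
  have hmonV : ∀ i, Tw.mk p E (M i) ∈ V := fun i =>
    Submodule.subset_span (Set.mem_range_self i)
  -- product of two monomials is a twisted multiple of a monomial
  have hmm : ∀ u w : Fin n → Fin p, Tw.mk p E (M u * M w) ∈ V := by
    intro u w
    set v : Fin n → Fin p := fun r => ⟨((u r : ℕ) + (w r : ℕ)) % p, Nat.mod_lt _ hp.pos⟩ with hv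
    set c : E := ∏ r, b r ^ (((u r : ℕ) + (w r : ℕ)) / p) with hc
    have key : M u * M w = c ^ p * M v := by
      rw [hM]
      simp only [monCoeff, hc, hv]
      rw [← Finset.prod_mul_distrib, ← Finset.prod_pow, ← Finset.prod_mul_distrib]
      apply Finset.prod_congr rfl
      intro r _
      rw [← pow_add, ← pow_mul, ← pow_add]
      congr 1
      exact (Nat.div_add_mod' ((u r : ℕ) + (w r : ℕ)) p).symm
    rw [key, ← Tw.smul_mk]
    exact Submodule.smul_mem _ _ (hmonV v)
  -- V is closed under multiplication
  have hmulgen : ∀ u : Fin n → Fin p, ∀ z : Tw p E, z ∈ V →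
      Tw.mk p E (M u * Tw.unmk p E z) ∈ V := by
    intro u z hz
    induction hz using Submodule.span_induction with
    | mem w hw =>
      obtain ⟨i, rfl⟩ := hw
      exact hmm u i
    | zero =>
      have h0 : Tw.mk p E (M u * Tw.unmk p E 0) = 0 := by
        show Tw.mk p E (M u * 0) = 0
        rw [mul_zero]; rfl
      rw [h0]; exact Submodule.zero_mem V
    | add z1 z2 h1 h2 ih1 ih2 =>
      have : M u * Tw.unmk p E (z1 + z2)
          = M u * Tw.unmk p E z1 + M u * Tw.unmk p E z2 := by
        show M u * (Tw.unmk p E z1 + Tw.unmk p E z2) = _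
        ring
      rw [this, Tw.mk_add]
      exact Submodule.add_mem V ih1 ih2
    | smul c z hzz ih =>
      have : M u * Tw.unmk p E (c • z) = c ^ p * (M u * Tw.unmk p E z) := by
        show M u * (c ^ p * Tw.unmk p E z) = _
        ring
      rw [this, ← Tw.smul_mk]
      exact Submodule.smul_mem V c ih
  have hmul : ∀ y z : Tw p E, y ∈ V → z ∈ V →
      Tw.mk p E (Tw.unmk p E y * Tw.unmk p E z) ∈ V := by
    intro y z hy hz
    induction hy using Submodule.span_induction with
    | mem w hw =>
      obtain ⟨i, rfl⟩ := hw
      exact hmulgen i z hz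
    | zero =>
      have h0 : Tw.mk p E (Tw.unmk p E 0 * Tw.unmk p E z) = 0 := by
        show Tw.mk p E (0 * Tw.unmk p E z) = 0
        rw [zero_mul]; rfl
      rw [h0]; exact Submodule.zero_mem V
    | add z1 z2 h1 h2 ih1 ih2 =>
      have : Tw.unmk p E (z1 + z2) * Tw.unmk p E z
          = Tw.unmk p E z1 * Tw.unmk p E z + Tw.unmk p E z2 * Tw.unmk p E z := by
        show (Tw.unmk p E z1 + Tw.unmk p E z2) * Tw.unmk p E z = _
        ring
      rw [this, Tw.mk_add]
      exact Submodule.add_mem V ih1 ih2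
    | smul c z1 hzz ih =>
      have : Tw.unmk p E (c • z1) * Tw.unmk p E z
          = c ^ p * (Tw.unmk p E z1 * Tw.unmk p E z) := by
        show (c ^ p * Tw.unmk p E z1) * Tw.unmk p E z = _
        ring
      rw [this, ← Tw.smul_mk]
      exact Submodule.smul_mem V c ih
  -- the zero exponent gives 1
  have hone : Tw.mk p E 1 ∈ V := by
    have h1 : M (fun _ => ⟨0, hp.pos⟩) = 1 := by
      rw [hM]; simp [monCoeff]
    have := hmonV (fun _ => ⟨0, hp.pos⟩)
    rwa [h1] at this
  -- b r is a monomial (exponent vector δ_r)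
  have hbV : ∀ r : Fin n, Tw.mk p E (b r) ∈ V := by
    intro r
    have h1 : M (fun r' => if r' = r then ⟨1, hp.one_lt⟩ else ⟨0, hp.pos⟩) = b r := by
      rw [hM]
      simp only [monCoeff]
      rw [Finset.prod_eq_single r]
      · simp
      · intro r' _ hr'; simp [hr']
      · intro h; exact absurd (Finset.mem_univ r) h
    have := hmonV (fun r' => if r' = r then ⟨1, hp.one_lt⟩ else ⟨0, hp.pos⟩)
    rwa [h1] at this
  -- V as a subalgebra over pPow p E
  let Vsub : Subalgebra (↥(pPow p E)) E :=
    { carrier := {y : E | Tw.mk p E y ∈ V}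
      mul_mem' := fun {y z} hy hz => hmul (Tw.mk p E y) (Tw.mk p E z) hy hz
      add_mem' := fun {y z} hy hz => by
        show Tw.mk p E (y + z) ∈ V
        rw [Tw.mk_add]; exact Submodule.add_mem V hy hz
      one_mem' := hone
      zero_mem' := by
        show Tw.mk p E 0 ∈ V
        rw [Tw.mk_zero]; exact Submodule.zero_mem V
      algebraMap_mem' := fun c => by
        obtain ⟨d, hd⟩ := (mem_pPow_iff p E (c : E)).1 c.2
        show Tw.mk p E (c : E) ∈ V
        rw [← hd, ← mul_one (d ^ p), ← Tw.smul_mk]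
        exact Submodule.smul_mem V d hone }
  constructor
  · -- V → K
    intro hx
    have hVK : V ≤
        { carrier := {z : Tw p E | Tw.unmk p E z ∈ K}
          add_mem' := fun {z1 z2} h1 h2 => by
            show Tw.unmk p E (z1 + z2) ∈ K
            show Tw.unmk p E z1 + Tw.unmk p E z2 ∈ K
            exact add_mem h1 h2
          zero_mem' := by show (0 : E) ∈ K; exact zero_mem K
          smul_mem' := fun c z hzz => by
            show Tw.unmk p E (c • z) ∈ K
            show c ^ p * Tw.unmk p E z ∈ K
            refine mul_mem ?_ hzz
            have : (c ^ p) ∈ pPow p E := (mem_pPow_iff p E _).2 ⟨c, rfl⟩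
            exact K.algebraMap_mem ⟨c ^ p, this⟩ } := by
      rw [hV, coeffSpan, Submodule.span_le]
      rintro _ ⟨i, rfl⟩
      show M i ∈ K
      rw [hM]
      simp only [monCoeff]
      exact prod_mem fun r _ => pow_mem
        (IntermediateField.subset_adjoin _ _ (Set.mem_range_self r)) _
    exact hVK hx
  · -- K → V
    intro hx
    have halg : ∀ y ∈ Set.range b, IsAlgebraic (↥(pPow p E)) y := fun y _ =>
      (isIntegral_pPow p E y).isAlgebraic
    have hKsub : K.toSubalgebra = Algebra.adjoin (↥(pPow p E)) (Set.range b) :=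
      IntermediateField.adjoin_toSubalgebra_of_isAlgebraic halg
    have hx2 : x ∈ Algebra.adjoin (↥(pPow p E)) (Set.range b) := by
      rw [← hKsub]; exact hx
    have hle : Algebra.adjoin (↥(pPow p E)) (Set.range b) ≤ Vsub := by
      apply Algebra.adjoin_le
      rintro _ ⟨r, rfl⟩
      exact hbV r
    exact hle hx2

end Aux2

section PowLemma

open Module Polynomial IntermediateField

/-- a finite purely inseparable extension in char `q` has degree a power of `q`. -/
lemma finrank_pow_of_purelyInseparable (q : ℕ) (hq : q.Prime) :
    ∀ (N : ℕ) (F E : Type w) [Field F] [Field E] [Algebra F E] [CharP F q] [CharP E q],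
      ∀ [IsPurelyInseparable F E] [FiniteDimensional F E], finrank F E = N →
      ∃ m : ℕ, N = q ^ m := by
  intro N
  induction N using Nat.strong_induction_on with
  | _ N ih =>
    intro F E _ _ _ _ _ _ _ hN
    haveI : Fact q.Prime := ⟨hq⟩
    haveI : ExpChar F q := ExpChar.prime hq
    by_cases hb : ∀ x : E, x ∈ (algebraMap F E).range
    · refine ⟨0, ?_⟩
      have hbij : Function.Bijective (algebraMap F E) :=
        ⟨(algebraMap F E).injective, hb⟩
      have e : F ≃ₗ[F] E := (AlgEquiv.ofBijective (Algebra.ofId F E) hbij).toLinearEquiv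
      rw [← hN, ← e.finrank_eq, finrank_self, pow_zero]
    · push_neg at hb
      obtain ⟨x, hx⟩ := hb
      have hxint : IsIntegral F x := IsIntegral.of_finite F x
      obtain ⟨k, y, hmin⟩ := IsPurelyInseparable.minpoly_eq_X_pow_sub_C F q x
      have h1 : finrank F F⟮x⟯ = q ^ k := by
        rw [IntermediateField.adjoin.finrank hxint, hmin]
        exact Polynomial.natDegree_X_pow_sub_C
      have hk : k ≠ 0 := by
        intro h0
        apply hx
        have : finrank F F⟮x⟯ = 1 := by rw [h1, h0, pow_zero]
        have hbot : F⟮x⟯ = ⊥ := IntermediateField.finrank_eq_one_iff.1 this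
        have hmem : x ∈ F⟮x⟯ := IntermediateField.mem_adjoin_simple_self F x
        rw [hbot, IntermediateField.mem_bot] at hmem
        exact hmem
      haveI : IsPurelyInseparable (↥F⟮x⟯) E := IsPurelyInseparable.tower_top F (↥F⟮x⟯) E
      haveI : FiniteDimensional (↥F⟮x⟯) E := FiniteDimensional.right F (↥F⟮x⟯) E
      haveI : CharP (↥F⟮x⟯) q :=
        charP_of_injective_algebraMap (algebraMap F (↥F⟮x⟯)).injective q
      have tower : finrank F (↥F⟮x⟯) * finrank (↥F⟮x⟯) E = finrank F E :=
        Module.finrank_mul_finrank F (↥F⟮x⟯) E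
      have hpos : 0 < finrank (↥F⟮x⟯) E := finrank_pos
      have hlt : finrank (↥F⟮x⟯) E < N := by
        rw [← hN, ← tower, h1]
        have h2 : 2 ≤ q ^ k := by
          calc 2 ≤ q := hq.two_le
          _ = q ^ 1 := (pow_one q).symm
          _ ≤ q ^ k := Nat.pow_le_pow_right hq.pos (Nat.one_le_iff_ne_zero.2 hk)
        calc finrank (↥F⟮x⟯) E = 1 * finrank (↥F⟮x⟯) E := (one_mul _).symm
        _ < q ^ k * finrank (↥F⟮x⟯) E := by
            exact (Nat.mul_lt_mul_right hpos).2 (by omega)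
      obtain ⟨m, hm⟩ := ih _ hlt (↥F⟮x⟯) E rfl
      exact ⟨k + m, by rw [← hN, ← tower, h1, hm, pow_add]⟩

end PowLemma

section Main

open Module IntermediateField

theorem dim_an_pfister_ge_of_subform (p : ℕ) [Fact p.Prime] (F : Type u) [Field F] [CharP F p]
    (n : ℕ) (a : Fin n → F) (ha0 : ∀ i, a i ≠ 0) (hindep : pIndep p a)
    (s : ℕ) (hs1 : 1 ≤ s) (hsn : s ≤ n)
    (E : Type v) [Field E] [Algebra F E] (ℓ e : ℕ)
    (hℓ : ℓ = s + 1 - defect p E (fun j : Fin (s + 1) => algebraMap F E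
      ((Fin.cons (1 : F) (fun i : Fin s => a (Fin.castLE hsn i)) : Fin (s + 1) → F) j)))
    (he : ℓ ≤ p ^ e) (hemin : ∀ e', ℓ ≤ p ^ e' → e ≤ e') :
    p ^ e ≤ p ^ n - defect p E
      (fun i : Fin n → Fin p => algebraMap F E (∏ r, a r ^ (i r : ℕ))) := by
  classical
  have hp : p.Prime := Fact.out
  haveI : CharP E p := charP_of_injective_algebraMap (algebraMap F E).injective p
  set b : Fin n → E := fun r => algebraMap F E (a r) with hb
  have hπ : (fun i : Fin n → Fin p => algebraMap F E (∏ r, a r ^ (i r : ℕ)))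
      = monCoeff p E n b := by
    funext i
    simp only [monCoeff, map_prod, map_pow, hb]
  set K := IntermediateField.adjoin (↥(pPow p E)) (Set.range b) with hK
  have hVπK : finrank E (coeffSpan p E (monCoeff p E n b)) = finrank (↥(pPow p E)) K :=
    finrank_tw_eq_finrank_pPow p E _ K (coeffSpan_mon_iff_adjoin p E n b)
  haveI : CharP (↥(pPow p E)) p :=
    (((pPow p E).subtype).charP_iff Subtype.val_injective p).mpr ‹_›
  haveI : ExpChar (↥(pPow p E)) p := ExpChar.prime hp
  haveI : Finite (Set.range b) := (Set.finite_range b).to_subtype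
  haveI : FiniteDimensional (↥(pPow p E)) K := by
    rw [hK]
    exact IntermediateField.finiteDimensional_adjoin (fun x _ => isIntegral_pPow p E x)
  haveI : IsPurelyInseparable (↥(pPow p E)) K := by
    rw [hK]
    refine (IntermediateField.isPurelyInseparable_adjoin_iff_pow_mem _ _ p).2 ?_
    intro x hx
    refine ⟨1, ⟨⟨x ^ p ^ 1, ?_⟩, rfl⟩⟩
    rw [pow_one]
    exact (mem_pPow_iff p E _).2 ⟨x, rfl⟩
  haveI : CharP (↥K) p :=
    charP_of_injective_algebraMap (algebraMap (↥(pPow p E)) (↥K)).injective p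
  obtain ⟨m, hm⟩ := finrank_pow_of_purelyInseparable p hp (finrank (↥(pPow p E)) K)
      (↥(pPow p E)) (↥K) rfl
  set c : Fin (s + 1) → E := fun j => algebraMap F E
      ((Fin.cons (1 : F) (fun i : Fin s => a (Fin.castLE hsn i)) : Fin (s + 1) → F) j) with hcdef
  have hsub : Set.range (fun j => Tw.mk p E (c j)) ⊆
      Set.range (fun i => Tw.mk p E (monCoeff p E n b i)) := by
    rintro _ ⟨j, rfl⟩
    refine Fin.cases ?_ ?_ j
    · refine ⟨fun _ => ⟨0, hp.pos⟩, ?_⟩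
      show Tw.mk p E (monCoeff p E n b (fun _ => ⟨0, hp.pos⟩)) = Tw.mk p E (c 0)
      have h1 : monCoeff p E n b (fun _ => ⟨0, hp.pos⟩) = 1 := by simp [monCoeff]
      have h2 : c 0 = 1 := by simp [hcdef]
      rw [h1, h2]
    · intro i
      refine ⟨fun r' => if r' = Fin.castLE hsn i then ⟨1, hp.one_lt⟩ else ⟨0, hp.pos⟩, ?_⟩
      show Tw.mk p E (monCoeff p E n b
          (fun r' => if r' = Fin.castLE hsn i then ⟨1, hp.one_lt⟩ else ⟨0, hp.pos⟩))
        = Tw.mk p E (c i.succ)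
      have h1 : monCoeff p E n b
          (fun r' => if r' = Fin.castLE hsn i then ⟨1, hp.one_lt⟩ else ⟨0, hp.pos⟩)
          = b (Fin.castLE hsn i) := by
        simp only [monCoeff]
        rw [Finset.prod_eq_single (Fin.castLE hsn i)]
        · simp
        · intro r' _ hr'; simp [hr']
        · intro h; exact absurd (Finset.mem_univ _) h
      have h2 : c i.succ = b (Fin.castLE hsn i) := by
        rw [hcdef]; simp [hb]
      rw [h1, h2]
  have hmono : finrank E (coeffSpan p E c) ≤ finrank E (coeffSpan p E (monCoeff p E n b)) :=
    Submodule.finrank_mono (Submodule.span_mono hsub)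
  have hσ := defect_add_finrank p E c
  have hπd := defect_add_finrank p E (monCoeff p E n b)
  rw [Fintype.card_fin] at hσ
  have hcard : Fintype.card (Fin n → Fin p) = p ^ n := by
    rw [Fintype.card_fun, Fintype.card_fin, Fintype.card_fin]
  rw [hcard] at hπd
  have hℓ2 : ℓ = finrank E (coeffSpan p E c) := by omega
  have hKm : finrank E (coeffSpan p E (monCoeff p E n b)) = p ^ m := by
    rw [hVπK, hm]
  have hle : ℓ ≤ p ^ m := by
    rw [hℓ2, ← hKm]; exact hmono
  have hem := hemin m hle
  have hpe : p ^ e ≤ p ^ m := Nat.pow_le_pow_right hp.pos hem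
  rw [hπ]
  omega

end Main
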